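/- For every integer m ≥ 4 and every integer s ≥ 1, there exists a finite-dimensional real Lie algebra 𝔤 together with a stratification 𝔤 = V₁ ⊕ ⋯ ⊕ V_s of step s with dim V₁ = m such that 𝔤 is hypergenerated (i.e. hypergenerated of order 1). -/

import Mathlib

/-- The submodule of a Lie algebra spanned by brackets of elements of two submodules. -/
def bracketSpan {L : Type*} [LieRing L] [LieAlgebra ℝ L] (A B : Submodule ℝ L) :
    Submodule ℝ L :=
  Submodule.span ℝ {z | ∃ x ∈ A, ∃ y ∈ B, ⁅x, y⁆ = z}

/-- The commutator submodule `[𝔤, 𝔤]` of a Lie algebra. -/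
def commutatorSubmodule (L : Type*) [LieRing L] [LieAlgebra ℝ L] : Submodule ℝ L :=
  bracketSpan (⊤ : Submodule ℝ L) ⊤

/-- A family `V` of submodules of a real Lie algebra `L` is a stratification of step `s` if
`L = V 1 ⊕ ⋯ ⊕ V s`, `[V 1, V (i-1)] = V i` for `2 ≤ i ≤ s`, `V s ≠ 0` and `[V 1, V s] = 0`.
We also require `V i = 0` for `i = 0` and `i > s`. -/
structure IsStratification (L : Type*) [LieRing L] [LieAlgebra ℝ L]
    (V : ℕ → Submodule ℝ L) (s : ℕ) : Prop where
  one_le_step : 1 ≤ s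
  isInternal : DirectSum.IsInternal (fun i : Fin s => V (i.1 + 1))
  bracket_eq : ∀ i, 2 ≤ i → i ≤ s → bracketSpan (V 1) (V (i - 1)) = V i
  last_ne_bot : V s ≠ ⊥
  bracket_last_eq_bot : bracketSpan (V 1) (V s) = ⊥
  zero_eq_bot : V 0 = ⊥
  eq_bot_of_gt : ∀ i, s < i → V i = ⊥

/-- A stratified real Lie algebra with strata `V` and rank `m = dim (V 1)` is hypergenerated of
order `k` if every subspace `P ⊆ V 1` with `dim P = m - k` satisfies `[𝔤,𝔤] ⊆ Lie(P)`. -/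
def IsHypergenerated (L : Type*) [LieRing L] [LieAlgebra ℝ L]
    (V : ℕ → Submodule ℝ L) (k : ℕ) : Prop :=
  ∀ P : Submodule ℝ L, P ≤ V 1 →
    Module.finrank ℝ P = Module.finrank ℝ (V 1) - k →
    commutatorSubmodule L ≤ (LieSubalgebra.lieSpan ℝ L (P : Set L)).toSubmodule

/-- A witness for the existence of a finite-dimensional real stratified Lie algebra of
rank `m` and step `s` that is hypergenerated of order `k`. -/
structure HypergeneratedWitness (m s k : ℕ) where
  L : Type
  [instLieRing : LieRing L]
  [instLieAlgebra : LieAlgebra ℝ L]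
  [instFiniteDimensional : FiniteDimensional ℝ L]
  V : ℕ → Submodule ℝ L
  strat : IsStratification L V s
  rank_eq : Module.finrank ℝ (V 1) = m
  hyper : IsHypergenerated L V k


namespace HyperConstruction

/-- The underlying vector space of the padded complex model filiform algebra. -/
abbrev Lgtt (s' t : ℕ) : Type := ℂ × ℂ × (Fin s' → ℂ) × (Fin t → ℝ)

variable {s' t : ℕ}

/-- The `(b, z)`-part of an element, as a vector of length `s' + 1`. -/
def Wc (u : Lgtt s' t) : Fin (s' + 1) → ℂ := Fin.cons u.2.1 u.2.2.1

@[simp] lemma Wc_add (u v : Lgtt s' t) : Wc (u + v) = Wc u + Wc v := by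
  funext k
  induction k using Fin.cases <;> simp [Wc]

@[simp] lemma Wc_smul (r : ℝ) (u : Lgtt s' t) : Wc (r • u) = r • Wc u := by
  funext k
  induction k using Fin.cases <;> simp [Wc]

@[simp] lemma Wc_zero (u : Lgtt s' t) : Wc u 0 = u.2.1 := rfl
@[simp] lemma Wc_succ (u : Lgtt s' t) (j : Fin s') : Wc u j.succ = u.2.2.1 j := rfl

instance : Bracket (Lgtt s' t) (Lgtt s' t) :=
  ⟨fun u v => (0, 0, fun k => u.1 * Wc v k.castSucc - v.1 * Wc u k.castSucc, 0)⟩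

lemma bracket_def (u v : Lgtt s' t) :
    ⁅u, v⁆ = ((0 : ℂ), (0 : ℂ),
      (fun k => u.1 * Wc v k.castSucc - v.1 * Wc u k.castSucc : Fin s' → ℂ),
      (0 : Fin t → ℝ)) := rfl

@[simp] lemma bracket_a (u v : Lgtt s' t) : (⁅u, v⁆ : Lgtt s' t).1 = 0 := rfl
@[simp] lemma bracket_b (u v : Lgtt s' t) : (⁅u, v⁆ : Lgtt s' t).2.1 = 0 := rfl
@[simp] lemma bracket_w (u v : Lgtt s' t) : (⁅u, v⁆ : Lgtt s' t).2.2.2 = 0 := rfl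
lemma bracket_z (u v : Lgtt s' t) (k : Fin s') :
    (⁅u, v⁆ : Lgtt s' t).2.2.1 k = u.1 * Wc v k.castSucc - v.1 * Wc u k.castSucc := rfl

@[simp] lemma Wc_bracket (u v : Lgtt s' t) :
    Wc ⁅u, v⁆ = Fin.cons 0
      (fun k => u.1 * Wc v k.castSucc - v.1 * Wc u k.castSucc) := rfl

instance : LieRing (Lgtt s' t) where
  add_lie x y z := by
    refine Prod.ext (by simp [bracket_def]) (Prod.ext (by simp [bracket_def]) ?_)
    refine Prod.ext ?_ (by simp [bracket_def])
    funext k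
    simp [bracket_def]
    ring
  lie_add x y z := by
    refine Prod.ext (by simp [bracket_def]) (Prod.ext (by simp [bracket_def]) ?_)
    refine Prod.ext ?_ (by simp [bracket_def])
    funext k
    simp [bracket_def]
    ring
  lie_self x := by
    refine Prod.ext (by simp [bracket_def]) (Prod.ext (by simp [bracket_def]) ?_)
    refine Prod.ext ?_ (by simp [bracket_def])
    funext k
    simp [bracket_def]
  leibniz_lie x y z := by
    refine Prod.ext ?_ (Prod.ext ?_ (Prod.ext ?_ ?_))
    · show (0:ℂ) = 0 + 0; simp
    · show (0:ℂ) = 0 + 0; simp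
    · funext k
      show (⁅x, ⁅y,z⁆⁆ : Lgtt s' t).2.2.1 k =
        (⁅⁅x,y⁆, z⁆ : Lgtt s' t).2.2.1 k + (⁅y, ⁅x,z⁆⁆ : Lgtt s' t).2.2.1 k
      simp only [bracket_z, Wc_bracket, bracket_a, zero_mul, sub_zero, mul_zero]
      generalize k.castSucc = k'
      induction k' using Fin.cases with
      | zero => simp
      | succ j => simp only [Fin.cons_succ]; ring
    · show (0 : Fin t → ℝ) = 0 + 0; simp

noncomputable instance : LieAlgebra ℝ (Lgtt s' t) where
  lie_smul r x y := by
    refine Prod.ext (by simp [bracket_def]) (Prod.ext (by simp [bracket_def]) ?_)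
    refine Prod.ext ?_ (by simp [bracket_def])
    funext k
    simp [bracket_def, Complex.real_smul]
    ring

/-- Embedding of the first stratum. -/
noncomputable def ι1 (s' t : ℕ) : (ℂ × ℂ × (Fin t → ℝ)) →ₗ[ℝ] Lgtt s' t where
  toFun p := (p.1, p.2.1, 0, p.2.2)
  map_add' p q := by simp [Prod.ext_iff]
  map_smul' r p := by simp [Prod.ext_iff]

/-- Embedding of the `(k+2)`-nd stratum. -/
noncomputable def ιz (s' t : ℕ) (k : Fin s') : ℂ →ₗ[ℝ] Lgtt s' t where
  toFun c := (0, 0, Pi.single k c, 0)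
  map_add' c d := by simp [Prod.ext_iff, Pi.single_add]
  map_smul' r c := by
    refine Prod.ext (by simp) (Prod.ext (by simp) (Prod.ext ?_ (by simp)))
    funext j
    simp only [RingHom.id_apply, Prod.smul_snd, Prod.smul_fst, Pi.smul_apply, Pi.single_apply]
    split_ifs <;> simp [Complex.real_smul]

/-- The strata. -/
noncomputable def Vv (s' t : ℕ) : ℕ → Submodule ℝ (Lgtt s' t)
  | 0 => ⊥
  | 1 => LinearMap.range (ι1 s' t)
  | (k + 2) => if h : k < s' then LinearMap.range (ιz s' t ⟨k, h⟩) else ⊥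

lemma mem_V1_iff (u : Lgtt s' t) : u ∈ Vv s' t 1 ↔ u.2.2.1 = 0 := by
  constructor
  · rintro ⟨p, rfl⟩; rfl
  · intro h
    exact ⟨(u.1, u.2.1, u.2.2.2), by simp [ι1, Prod.ext_iff, h.symm]⟩

lemma V1_z_eq_zero {u : Lgtt s' t} (h : u ∈ Vv s' t 1) : u.2.2.1 = 0 :=
  (mem_V1_iff u).1 h



@[simp] lemma i1_apply (p : ℂ × ℂ × (Fin t → ℝ)) :
    ι1 s' t p = (p.1, p.2.1, 0, p.2.2) := rfl

@[simp] lemma iz_apply (k : Fin s') (c : ℂ) :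
    ιz s' t k c = (0, 0, Pi.single k c, 0) := rfl

lemma i1_injective : Function.Injective (ι1 s' t) := by
  intro p q h
  simp only [i1_apply, Prod.ext_iff] at h
  exact Prod.ext h.1 (Prod.ext h.2.1 h.2.2.2)

lemma iz_injective (k : Fin s') : Function.Injective (ιz s' t k) := by
  intro c d h
  simp only [iz_apply, Prod.ext_iff] at h
  have := congrFun h.2.2.1 k
  simpa using this

lemma Vv_two_eq (k : ℕ) (h : k < s') :
    Vv s' t (k + 2) = LinearMap.range (ιz s' t ⟨k, h⟩) := by
  simp [Vv, h]

lemma mem_V1 (p : ℂ × ℂ × (Fin t → ℝ)) : ι1 s' t p ∈ Vv s' t 1 := ⟨p, rfl⟩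

lemma sum_iotaz (f : Fin s' → ℂ) :
    (∑ k, ιz s' t k (f k)) = ((0 : ℂ), (0 : ℂ), f, (0 : Fin t → ℝ)) := by
  refine Prod.ext ?_ (Prod.ext ?_ (Prod.ext ?_ ?_))
  · rw [Prod.fst_sum]; simp
  · rw [Prod.snd_sum, Prod.fst_sum]; simp
  · rw [Prod.snd_sum, Prod.snd_sum, Prod.fst_sum]
    funext j
    rw [Finset.sum_apply]
    simp [Pi.single_apply]
  · rw [Prod.snd_sum, Prod.snd_sum, Prod.snd_sum]; simp

lemma decomp (u : Lgtt s' t) :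
    u = ι1 s' t (u.1, u.2.1, u.2.2.2) + ∑ k, ιz s' t k (u.2.2.1 k) := by
  rw [sum_iotaz]
  refine Prod.ext ?_ (Prod.ext ?_ (Prod.ext ?_ ?_)) <;> simp

lemma bracket_eq_sum (x y : Lgtt s' t) :
    ⁅x, y⁆ = ∑ k, ιz s' t k ((⁅x, y⁆ : Lgtt s' t).2.2.1 k) := by
  rw [sum_iotaz]
  exact Prod.ext rfl (Prod.ext rfl (Prod.ext rfl rfl))

lemma bracket_V1_V1 {u v : Lgtt s' t} (hu : u ∈ Vv s' t 1) (hv : v ∈ Vv s' t 1)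
    (h : 0 < s') :
    ⁅u, v⁆ = ιz s' t ⟨0, h⟩ (u.1 * v.2.1 - v.1 * u.2.1) := by
  have hu' := V1_z_eq_zero hu
  have hv' := V1_z_eq_zero hv
  refine Prod.ext rfl (Prod.ext rfl (Prod.ext ?_ rfl))
  funext k
  rcases k with ⟨j, hk⟩
  have hL : (⁅u, v⁆ : Lgtt s' t).2.2.1 ⟨j, hk⟩
      = u.1 * Wc v (Fin.castSucc ⟨j, hk⟩) - v.1 * Wc u (Fin.castSucc ⟨j, hk⟩) := rfl
  rw [hL, iz_apply]
  have hR : (((0:ℂ), (0:ℂ), Pi.single (⟨0, h⟩ : Fin s') (u.1 * v.2.1 - v.1 * u.2.1),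
      (0 : Fin t → ℝ)) : Lgtt s' t).2.2.1 ⟨j, hk⟩
      = Pi.single (M := fun _ : Fin s' => ℂ) ⟨0, h⟩ (u.1 * v.2.1 - v.1 * u.2.1) ⟨j, hk⟩ := rfl
  rw [hR]
  cases j with
  | zero =>
    rw [show (Fin.castSucc ⟨0, hk⟩ : Fin (s' + 1)) = 0 by simp [Fin.ext_iff]]
    rw [Wc_zero, Wc_zero, Pi.single_eq_same]
  | succ i =>
    rw [show (Fin.castSucc ⟨i + 1, hk⟩ : Fin (s' + 1)) = Fin.succ ⟨i, by omega⟩ by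
      simp [Fin.ext_iff]]
    rw [Wc_succ, Wc_succ, hu', hv', Pi.single_eq_of_ne (by simp [Fin.ext_iff])]
    simp

lemma bracket_V1_iz {u : Lgtt s' t} (hu : u ∈ Vv s' t 1) (n : ℕ) (hn : n < s') (c : ℂ)
    (h : n + 1 < s') :
    ⁅u, ιz s' t ⟨n, hn⟩ c⁆ = ιz s' t ⟨n + 1, h⟩ (u.1 * c) := by
  refine Prod.ext rfl (Prod.ext rfl (Prod.ext ?_ rfl))
  funext k
  rcases k with ⟨j, hk⟩
  have hL : (⁅u, ιz s' t ⟨n, hn⟩ c⁆ : Lgtt s' t).2.2.1 ⟨j, hk⟩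
      = u.1 * Wc (ιz s' t ⟨n, hn⟩ c) (Fin.castSucc ⟨j, hk⟩)
        - (ιz s' t ⟨n, hn⟩ c).1 * Wc u (Fin.castSucc ⟨j, hk⟩) := rfl
  rw [hL, iz_apply (k := ⟨n + 1, h⟩)]
  have hR : (((0:ℂ), (0:ℂ), Pi.single (⟨n + 1, h⟩ : Fin s') (u.1 * c),
      (0 : Fin t → ℝ)) : Lgtt s' t).2.2.1 ⟨j, hk⟩
      = Pi.single (M := fun _ : Fin s' => ℂ) ⟨n + 1, h⟩ (u.1 * c) ⟨j, hk⟩ := rfl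
  rw [hR]
  have hz1 : (ιz s' t ⟨n, hn⟩ c).1 = 0 := rfl
  have hz2 : (ιz s' t ⟨n, hn⟩ c).2.1 = 0 := rfl
  have hz3 : (ιz s' t ⟨n, hn⟩ c).2.2.1 = Pi.single ⟨n, hn⟩ c := rfl
  cases j with
  | zero =>
    rw [show (Fin.castSucc ⟨0, hk⟩ : Fin (s' + 1)) = 0 by simp [Fin.ext_iff]]
    rw [Wc_zero, hz1, hz2, Pi.single_eq_of_ne (by simp [Fin.ext_iff])]
    simp
  | succ i =>
    rw [show (Fin.castSucc ⟨i + 1, hk⟩ : Fin (s' + 1)) = Fin.succ ⟨i, by omega⟩ by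
      simp [Fin.ext_iff]]
    rw [Wc_succ, hz1, hz3]
    rw [Pi.single_apply, Pi.single_apply]
    simp only [Fin.mk.injEq, zero_mul, sub_zero]
    by_cases hin : i = n
    · subst hin; simp
    · rw [if_neg (by omega), if_neg (by omega), mul_zero]

lemma bracket_V1_iz_top {u : Lgtt s' t} (hu : u ∈ Vv s' t 1) (n : ℕ) (hn : n < s') (c : ℂ)
    (h : ¬ (n + 1 < s')) :
    ⁅u, ιz s' t ⟨n, hn⟩ c⁆ = 0 := by
  refine Prod.ext rfl (Prod.ext rfl (Prod.ext ?_ rfl))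
  funext k
  rcases k with ⟨j, hk⟩
  have hL : (⁅u, ιz s' t ⟨n, hn⟩ c⁆ : Lgtt s' t).2.2.1 ⟨j, hk⟩
      = u.1 * Wc (ιz s' t ⟨n, hn⟩ c) (Fin.castSucc ⟨j, hk⟩)
        - (ιz s' t ⟨n, hn⟩ c).1 * Wc u (Fin.castSucc ⟨j, hk⟩) := rfl
  rw [hL]
  have hz1 : (ιz s' t ⟨n, hn⟩ c).1 = 0 := rfl
  have hz2 : (ιz s' t ⟨n, hn⟩ c).2.1 = 0 := rfl
  have hz3 : (ιz s' t ⟨n, hn⟩ c).2.2.1 = Pi.single ⟨n, hn⟩ c := rfl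
  cases j with
  | zero =>
    rw [show (Fin.castSucc ⟨0, hk⟩ : Fin (s' + 1)) = 0 by simp [Fin.ext_iff]]
    rw [Wc_zero, hz1, hz2]
    simp
  | succ i =>
    rw [show (Fin.castSucc ⟨i + 1, hk⟩ : Fin (s' + 1)) = Fin.succ ⟨i, by omega⟩ by
      simp [Fin.ext_iff]]
    rw [Wc_succ, hz1, hz3, Pi.single_eq_of_ne (by simp [Fin.ext_iff]; omega)]
    simp

/-- Projections. -/
noncomputable def pa (s' t : ℕ) : Lgtt s' t →ₗ[ℝ] ℂ := LinearMap.fst ℝ ℂ _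
noncomputable def pb (s' t : ℕ) : Lgtt s' t →ₗ[ℝ] ℂ :=
  (LinearMap.fst ℝ ℂ _).comp (LinearMap.snd ℝ ℂ _)
noncomputable def pz (s' t : ℕ) (k : Fin s') : Lgtt s' t →ₗ[ℝ] ℂ :=
  (LinearMap.proj k).comp ((LinearMap.fst ℝ _ _).comp
    ((LinearMap.snd ℝ _ _).comp (LinearMap.snd ℝ ℂ _)))
noncomputable def pw (s' t : ℕ) : Lgtt s' t →ₗ[ℝ] (Fin t → ℝ) :=
  (LinearMap.snd ℝ _ _).comp ((LinearMap.snd ℝ _ _).comp (LinearMap.snd ℝ ℂ _))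

@[simp] lemma pa_apply (u : Lgtt s' t) : pa s' t u = u.1 := rfl
@[simp] lemma pb_apply (u : Lgtt s' t) : pb s' t u = u.2.1 := rfl
@[simp] lemma pz_apply (k : Fin s') (u : Lgtt s' t) : pz s' t k u = u.2.2.1 k := rfl
@[simp] lemma pw_apply (u : Lgtt s' t) : pw s' t u = u.2.2.2 := rfl

lemma isInternal : DirectSum.IsInternal (fun i : Fin (s' + 1) => Vv s' t (i.1 + 1)) := by
  rw [DirectSum.isInternal_submodule_iff_iSupIndep_and_iSup_eq_top]
  constructor
  · intro i
    rw [Submodule.disjoint_def]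
    rcases i with ⟨i, hi⟩
    cases i with
    | zero =>
      intro x hx hx'
      have hle : (⨆ (j : Fin (s' + 1)) (_ : j ≠ ⟨0, hi⟩), Vv s' t (j.1 + 1)) ≤
          LinearMap.ker (pa s' t) ⊓ (LinearMap.ker (pb s' t) ⊓ LinearMap.ker (pw s' t)) := by
        refine iSup_le fun j => iSup_le fun hj => ?_
        rcases j with ⟨j, hj'⟩
        cases j with
        | zero => exact absurd rfl hj
        | succ n =>
          intro x hx
          have hx2 : x ∈ Vv s' t (n + 2) := hx
          rw [Vv_two_eq n (by omega)] at hx2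
          obtain ⟨c, rfl⟩ := hx2
          simp [LinearMap.mem_ker]
      have hx'' := hle hx'
      obtain ⟨p, rfl⟩ := hx
      simp only [Submodule.mem_inf, LinearMap.mem_ker, pa_apply, pb_apply, pw_apply,
        i1_apply] at hx''
      simp [i1_apply, Prod.ext_iff, hx''.1, hx''.2.1, hx''.2.2]
    | succ n =>
      intro x hx hx'
      have hn : n < s' := by omega
      have hle : (⨆ (j : Fin (s' + 1)) (_ : j ≠ ⟨n + 1, hi⟩), Vv s' t (j.1 + 1)) ≤
          LinearMap.ker (pz s' t ⟨n, hn⟩) := by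
        refine iSup_le fun j => iSup_le fun hj => ?_
        rcases j with ⟨j, hj'⟩
        cases j with
        | zero =>
          rintro x hx
          obtain ⟨p, rfl⟩ := hx
          simp [LinearMap.mem_ker]
        | succ i =>
          intro x hx
          have hx2 : x ∈ Vv s' t (i + 2) := hx
          rw [Vv_two_eq i (by omega)] at hx2
          obtain ⟨c, rfl⟩ := hx2
          have hne : (⟨i, by omega⟩ : Fin s') ≠ ⟨n, hn⟩ := by
            simp only [ne_eq, Fin.mk.injEq]
            intro hcon
            exact hj (by simp [Fin.ext_iff, hcon])
          simp only [LinearMap.mem_ker, pz_apply, iz_apply]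
          exact Pi.single_eq_of_ne (Ne.symm hne) _
      have hx'' := hle hx'
      have hx2 : x ∈ Vv s' t (n + 2) := hx
      rw [Vv_two_eq n hn] at hx2
      obtain ⟨c, rfl⟩ := hx2
      simp only [LinearMap.mem_ker, pz_apply, iz_apply, Pi.single_eq_same] at hx''
      simp [hx'']
  · rw [eq_top_iff]
    rintro u -
    rw [decomp u]
    refine Submodule.add_mem _ ?_ (Submodule.sum_mem _ ?_)
    · exact Submodule.mem_iSup_of_mem ⟨0, by omega⟩ (mem_V1 _)
    · intro k _
      refine Submodule.mem_iSup_of_mem ⟨k.1 + 1, by omega⟩ ?_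
      show _ ∈ Vv s' t (k.1 + 2)
      rw [Vv_two_eq k.1 k.2]
      exact ⟨u.2.2.1 k, rfl⟩

lemma finrank_V1 : Module.finrank ℝ (Vv s' t 1) = 2 + (2 + t) := by
  show Module.finrank ℝ (LinearMap.range (ι1 s' t)) = _
  rw [LinearMap.finrank_range_of_inj i1_injective]
  rw [Module.finrank_prod, Module.finrank_prod, Complex.finrank_real_complex,
    Module.finrank_fin_fun]

lemma strat : IsStratification (Lgtt s' t) (Vv s' t) (s' + 1) where
  one_le_step := by omega
  isInternal := isInternal
  bracket_eq := by
    intro i h2 hs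
    obtain ⟨k, rfl⟩ : ∃ k, i = k + 2 := ⟨i - 2, by omega⟩
    have hk : k < s' := by omega
    have hks : k + 2 - 1 = k + 1 := by omega
    rw [hks, Vv_two_eq k hk]
    apply le_antisymm
    · rw [bracketSpan, Submodule.span_le]
      rintro _ ⟨x, hx, y, hy, rfl⟩
      cases k with
      | zero =>
        rw [SetLike.mem_coe, bracket_V1_V1 hx hy hk]
        exact ⟨_, rfl⟩
      | succ n =>
        have hy2 : y ∈ Vv s' t (n + 2) := hy
        rw [Vv_two_eq n (by omega)] at hy2
        obtain ⟨c, rfl⟩ := hy2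
        rw [SetLike.mem_coe, bracket_V1_iz hx n (by omega) c hk]
        exact ⟨_, rfl⟩
    · rintro _ ⟨c, rfl⟩
      apply Submodule.subset_span
      cases k with
      | zero =>
        refine ⟨ι1 s' t (1, 0, 0), mem_V1 _, ι1 s' t (0, c, 0), mem_V1 _, ?_⟩
        rw [bracket_V1_V1 (mem_V1 _) (mem_V1 _) hk]
        simp
      | succ n =>
        refine ⟨ι1 s' t (1, 0, 0), mem_V1 _, ιz s' t ⟨n, by omega⟩ c, ?_, ?_⟩
        · show ιz s' t ⟨n, by omega⟩ c ∈ Vv s' t (n + 2)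
          rw [Vv_two_eq n (by omega)]
          exact ⟨c, rfl⟩
        · rw [bracket_V1_iz (mem_V1 _) n (by omega) c hk]
          simp
  last_ne_bot := by
    rw [Submodule.ne_bot_iff]
    cases s' with
    | zero =>
      refine ⟨ι1 0 t (1, 0, 0), mem_V1 _, ?_⟩
      intro hcon
      have := congrArg Prod.fst hcon
      simpa using this
    | succ n =>
      have hn : n < n + 1 := by omega
      refine ⟨ιz (n + 1) t ⟨n, hn⟩ 1, ?_, ?_⟩
      · show _ ∈ Vv (n + 1) t (n + 2)
        rw [Vv_two_eq n hn]
        exact ⟨1, rfl⟩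
      · intro hcon
        have h2 := congrArg (fun u : Lgtt (n + 1) t => u.2.2.1 ⟨n, hn⟩) hcon
        simp [Pi.single_eq_same] at h2
  bracket_last_eq_bot := by
    rw [bracketSpan, Submodule.span_eq_bot]
    rintro _ ⟨x, hx, y, hy, rfl⟩
    cases s' with
    | zero =>
      refine Prod.ext rfl (Prod.ext rfl (Prod.ext ?_ rfl))
      funext k
      exact k.elim0
    | succ n =>
      have hy2 : y ∈ Vv (n + 1) t (n + 2) := hy
      rw [Vv_two_eq n (by omega)] at hy2
      obtain ⟨c, rfl⟩ := hy2
      exact bracket_V1_iz_top hx n (by omega) c (by omega)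
  zero_eq_bot := rfl
  eq_bot_of_gt := by
    intro i hi
    obtain ⟨k, rfl⟩ : ∃ k, i = k + 2 := ⟨i - 2, by omega⟩
    simp [Vv, show ¬ k < s' by omega]



/-- Projection to the two complex "generator" coordinates. -/
noncomputable def qmap (s' t : ℕ) : Lgtt s' t →ₗ[ℝ] ℂ × ℂ :=
  LinearMap.prod (pa s' t) (pb s' t)

@[simp] lemma qmap_apply (u : Lgtt s' t) : qmap s' t u = (u.1, u.2.1) := rfl

/-- The complex symplectic form on `ℂ × ℂ`. -/
def om (u v : ℂ × ℂ) : ℂ := u.1 * v.2 - v.1 * u.2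

/-- The real plane spanned by two vectors. -/
noncomputable def hline (u v : ℂ × ℂ) : (ℝ × ℝ) →ₗ[ℝ] ℂ × ℂ :=
  ((LinearMap.fst ℝ ℝ ℝ).smulRight u) + ((LinearMap.snd ℝ ℝ ℝ).smulRight v)

@[simp] lemma hline_apply (u v : ℂ × ℂ) (p : ℝ × ℝ) :
    hline u v p = p.1 • u + p.2 • v := rfl

lemma finrank_range_hline (u v : ℂ × ℂ) :
    Module.finrank ℝ (LinearMap.range (hline u v)) ≤ 2 := by
  have h := LinearMap.finrank_range_le (hline u v)
  rwa [Module.finrank_prod, Module.finrank_self] at h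

lemma mem_hline_smul (u v : ℂ × ℂ) (lam : ℂ) (h1 : v.1 = lam * u.1)
    (h2 : v.2 = lam * u.2) : v ∈ LinearMap.range (hline u (Complex.I • u)) := by
  refine ⟨(lam.re, lam.im), ?_⟩
  have key : ∀ z : ℂ, (lam.re : ℝ) • z + (lam.im : ℝ) • (Complex.I * z) = lam * z := by
    intro z
    rw [Complex.real_smul, Complex.real_smul]
    linear_combination z * (Complex.re_add_im lam)
  refine Prod.ext ?_ ?_
  · show (lam.re : ℝ) • u.1 + (lam.im : ℝ) • (Complex.I • u).1 = v.1
    rw [Prod.smul_fst, smul_eq_mul, key, h1]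
  · show (lam.re : ℝ) • u.2 + (lam.im : ℝ) • (Complex.I • u).2 = v.2
    rw [Prod.smul_snd, smul_eq_mul, key, h2]

lemma om_zero_mem_line (u v : ℂ × ℂ) (hu : u ≠ 0) (h : om u v = 0) :
    v ∈ LinearMap.range (hline u (Complex.I • u)) := by
  rw [om, sub_eq_zero] at h
  by_cases h1 : u.1 = 0
  · have h2 : u.2 ≠ 0 := by
      intro h2
      exact hu (Prod.ext h1 h2)
    refine mem_hline_smul u v (v.2 / u.2) ?_ ?_
    · rw [h1, mul_zero]
      have : v.1 * u.2 = 0 := by rw [← h, h1, zero_mul]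
      exact (mul_eq_zero.mp this).resolve_right h2
    · rw [div_mul_cancel₀ _ h2]
  · refine mem_hline_smul u v (v.1 / u.1) ?_ ?_
    · rw [div_mul_cancel₀ _ h1]
    · rw [div_mul_eq_mul_div, eq_div_iff h1]
      linear_combination h

lemma solve2 (u v x : ℂ × ℂ) (hc : om u v ≠ 0) (α β : ℝ)
    (h1 : om u x = (α : ℂ) * om u v) (h2 : om v x = (β : ℂ) * om u v) :
    x ∈ LinearMap.range (hline u v) := by
  simp only [om] at h1 h2 hc
  have e1 : (x.1 - ((α : ℂ) * v.1 - (β : ℂ) * u.1)) * (u.1 * v.2 - v.1 * u.2) = 0 := by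
    linear_combination v.1 * h1 - u.1 * h2
  have e2 : (x.2 - ((α : ℂ) * v.2 - (β : ℂ) * u.2)) * (u.1 * v.2 - v.1 * u.2) = 0 := by
    linear_combination v.2 * h1 - u.2 * h2
  have f1 := sub_eq_zero.mp ((mul_eq_zero.mp e1).resolve_right hc)
  have f2 := sub_eq_zero.mp ((mul_eq_zero.mp e2).resolve_right hc)
  refine ⟨(-β, α), Prod.ext ?_ ?_⟩
  · show (-β : ℝ) • u.1 + (α : ℝ) • v.1 = x.1
    rw [Complex.real_smul, Complex.real_smul, f1]
    push_cast
    ring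
  · show (-β : ℝ) • u.2 + (α : ℝ) • v.2 = x.2
    rw [Complex.real_smul, Complex.real_smul, f2]
    push_cast
    ring

lemma span_pair_eq_top (c d : ℂ) (hc : c ≠ 0) (hd : ∀ r : ℝ, d ≠ (r : ℂ) * c) :
    Submodule.span ℝ ({c, d} : Set ℂ) = ⊤ := by
  have hli : LinearIndependent ℝ ![c, d] := by
    rw [LinearIndependent.pair_iff]
    intro r s hrs
    by_cases hs : s = 0
    · subst hs
      refine ⟨?_, rfl⟩
      rw [zero_smul, add_zero, Complex.real_smul] at hrs
      rcases mul_eq_zero.mp hrs with h | h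
      · exact_mod_cast h
      · exact absurd h hc
    · exfalso
      apply hd (-r / s)
      have hd' : s • d = (-r : ℝ) • c := by
        rw [neg_smul]
        exact eq_neg_of_add_eq_zero_right hrs
      have hd2 : d = ((s⁻¹ * -r : ℝ)) • c := by
        rw [mul_smul, ← hd', inv_smul_smul₀ hs]
      rw [hd2, Complex.real_smul]
      push_cast
      ring
  have hcard : Fintype.card (Fin 2) = Module.finrank ℝ ℂ := by
    rw [Complex.finrank_real_complex, Fintype.card_fin]
  have hsp := hli.span_eq_top_of_card_eq_finrank hcard
  rw [show ({c, d} : Set ℂ) = Set.range ![c, d] by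
    ext z
    simp [Fin.exists_fin_two]
    tauto]
  exact hsp

/-- Embedding used to bound subspaces avoiding the `a`-coordinate. -/
noncomputable def ιbw (s' t : ℕ) : (ℂ × (Fin t → ℝ)) →ₗ[ℝ] Lgtt s' t where
  toFun p := (0, p.1, 0, p.2)
  map_add' p q := by simp [Prod.ext_iff]
  map_smul' r p := by simp [Prod.ext_iff]

lemma ibw_injective : Function.Injective (ιbw s' t) := by
  intro p q h
  have h1 := congrArg (fun u : Lgtt s' t => u.2.1) h
  have h2 := congrArg (fun u : Lgtt s' t => u.2.2.2) h
  exact Prod.ext h1 h2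

lemma finrank_range_ibw : Module.finrank ℝ (LinearMap.range (ιbw s' t)) = 2 + t := by
  rw [LinearMap.finrank_range_of_inj ibw_injective, Module.finrank_prod,
    Complex.finrank_real_complex, Module.finrank_fin_fun]

lemma hyper : IsHypergenerated (Lgtt s' t) (Vv s' t) 1 := by
  intro P hP hPrank
  set Q := LieSubalgebra.lieSpan ℝ (Lgtt s' t) (P : Set (Lgtt s' t)) with hQdef
  have hPQ : ∀ {x : Lgtt s' t}, x ∈ P → x ∈ Q :=
    fun hx => LieSubalgebra.subset_lieSpan hx
  rw [finrank_V1] at hPrank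
  have hfr : Module.finrank ℝ P = 3 + t := by omega
  have key : ∀ n (hn : n < s') (c : ℂ), ιz s' t ⟨n, hn⟩ c ∈ Q := by
    intro n
    induction n with
    | zero =>
      intro hn c0
      set K := Submodule.map (qmap s' t) P with hK
      have hK3 : 3 ≤ Module.finrank ℝ K := by
        have hrn := LinearMap.finrank_range_add_finrank_ker ((qmap s' t).domRestrict P)
        rw [LinearMap.range_domRestrict] at hrn
        rw [← hK] at hrn
        have hker : Module.finrank ℝ
            (LinearMap.ker ((qmap s' t).domRestrict P)) ≤ t := by
          have hinj : Function.Injective ((pw s' t).comp (P.subtype.comp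
              (LinearMap.ker ((qmap s' t).domRestrict P)).subtype)) := by
            intro a b hab
            have ha := a.2
            have hb := b.2
            rw [LinearMap.mem_ker] at ha hb
            have ha1 : (a.1 : Lgtt s' t).1 = 0 := congrArg Prod.fst ha
            have ha2 : (a.1 : Lgtt s' t).2.1 = 0 := congrArg Prod.snd ha
            have hb1 : (b.1 : Lgtt s' t).1 = 0 := congrArg Prod.fst hb
            have hb2 : (b.1 : Lgtt s' t).2.1 = 0 := congrArg Prod.snd hb
            have haz := V1_z_eq_zero (hP a.1.2)
            have hbz := V1_z_eq_zero (hP b.1.2)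
            have hw : (a.1 : Lgtt s' t).2.2.2 = (b.1 : Lgtt s' t).2.2.2 := hab
            apply Subtype.ext
            apply Subtype.ext
            refine Prod.ext (ha1.trans hb1.symm)
              (Prod.ext (ha2.trans hb2.symm) (Prod.ext (haz.trans hbz.symm) hw))
          have hb := LinearMap.finrank_le_finrank_of_injective hinj
          rwa [Module.finrank_fin_fun] at hb
        omega
      have hKne : K ≠ ⊥ := by
        intro hbot
        rw [hbot, finrank_bot] at hK3
        omega
      obtain ⟨u, huK, hu0⟩ := (Submodule.ne_bot_iff K).mp hKne
      have hnotle1 : ¬ K ≤ LinearMap.range (hline u (Complex.I • u)) := by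
        intro hle
        have hmono := Submodule.finrank_mono hle
        have htwo := finrank_range_hline u (Complex.I • u)
        omega
      obtain ⟨v, hvK, hv⟩ := SetLike.not_le_iff_exists.mp hnotle1
      have hc : om u v ≠ 0 := fun h => hv (om_zero_mem_line u v hu0 h)
      have hnotle2 : ¬ K ≤ LinearMap.range (hline u v) := by
        intro hle
        have hmono := Submodule.finrank_mono hle
        have htwo := finrank_range_hline u v
        omega
      obtain ⟨x, hxK, hx⟩ := SetLike.not_le_iff_exists.mp hnotle2
      have hd : (∀ r : ℝ, om u x ≠ (r : ℂ) * om u v) ∨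
          (∀ r : ℝ, om v x ≠ (r : ℂ) * om u v) := by
        by_contra hcon
        push_neg at hcon
        obtain ⟨⟨α, hα⟩, ⟨β, hβ⟩⟩ := hcon
        exact hx (solve2 u v x hc α β hα hβ)
      obtain ⟨pu, hpu, rfl⟩ := Submodule.mem_map.mp huK
      obtain ⟨pv, hpv, rfl⟩ := Submodule.mem_map.mp hvK
      obtain ⟨px, hpx, rfl⟩ := Submodule.mem_map.mp hxK
      have hbuv : ⁅pu, pv⁆ = ιz s' t ⟨0, hn⟩ (om (qmap s' t pu) (qmap s' t pv)) :=
        bracket_V1_V1 (hP hpu) (hP hpv) hn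
      have hbux : ⁅pu, px⁆ = ιz s' t ⟨0, hn⟩ (om (qmap s' t pu) (qmap s' t px)) :=
        bracket_V1_V1 (hP hpu) (hP hpx) hn
      have hbvx : ⁅pv, px⁆ = ιz s' t ⟨0, hn⟩ (om (qmap s' t pv) (qmap s' t px)) :=
        bracket_V1_V1 (hP hpv) (hP hpx) hn
      have hfinish : ∀ d : ℂ, (∀ r : ℝ, d ≠ (r : ℂ) * om (qmap s' t pu) (qmap s' t pv)) →
          ιz s' t ⟨0, hn⟩ d ∈ Q → ιz s' t ⟨0, hn⟩ c0 ∈ Q := by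
        intro d hdprop hdmem
        have hspan := span_pair_eq_top (om (qmap s' t pu) (qmap s' t pv)) d hc hdprop
        have hT : Submodule.span ℝ ({om (qmap s' t pu) (qmap s' t pv), d} : Set ℂ) ≤
            Submodule.comap (ιz s' t ⟨0, hn⟩) (Q : Submodule ℝ (Lgtt s' t)) := by
          rw [Submodule.span_le]
          intro z hz
          rcases Set.mem_insert_iff.mp hz with rfl | hz2
          · rw [SetLike.mem_coe, Submodule.mem_comap, ← hbuv]
            exact (LieSubalgebra.mem_toSubmodule _).mpr (Q.lie_mem (hPQ hpu) (hPQ hpv))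
          · rcases Set.mem_singleton_iff.mp hz2 with rfl
            rw [SetLike.mem_coe, Submodule.mem_comap]
            exact (LieSubalgebra.mem_toSubmodule _).mpr hdmem
        have htop : (⊤ : Submodule ℝ ℂ) ≤
            Submodule.comap (ιz s' t ⟨0, hn⟩) (Q : Submodule ℝ (Lgtt s' t)) :=
          hspan ▸ hT
        have := htop (Submodule.mem_top (x := c0))
        rwa [Submodule.mem_comap, LieSubalgebra.mem_toSubmodule] at this
      rcases hd with hdu | hdv
      · refine hfinish _ hdu ?_
        rw [← hbux]
        exact Q.lie_mem (hPQ hpu) (hPQ hpx)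
      · refine hfinish _ hdv ?_
        rw [← hbvx]
        exact Q.lie_mem (hPQ hpv) (hPQ hpx)
    | succ n ih =>
      intro hn c
      have hmem_a : ∃ p ∈ P, p.1 ≠ 0 := by
        by_contra hcon
        push_neg at hcon
        have hle : P ≤ LinearMap.range (ιbw s' t) := by
          intro p hp
          refine ⟨(p.2.1, p.2.2.2), ?_⟩
          refine Prod.ext (hcon p hp).symm
            (Prod.ext rfl (Prod.ext (V1_z_eq_zero (hP hp)).symm rfl))
        have h1 := Submodule.finrank_mono hle
        rw [finrank_range_ibw, hfr] at h1
        omega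
      obtain ⟨p, hpP, hpa⟩ := hmem_a
      have hb := Q.lie_mem (hPQ hpP) (ih (by omega) (p.1⁻¹ * c))
      rw [bracket_V1_iz (hP hpP) n (by omega) (p.1⁻¹ * c) hn] at hb
      rw [← mul_assoc, mul_inv_cancel₀ hpa, one_mul] at hb
      exact hb
  rw [commutatorSubmodule, bracketSpan, Submodule.span_le]
  rintro _ ⟨x, -, y, -, rfl⟩
  rw [SetLike.mem_coe]
  refine (LieSubalgebra.mem_toSubmodule _).mpr ?_
  rw [bracket_eq_sum x y]
  refine Submodule.sum_mem _ ?_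
  intro k _
  exact (LieSubalgebra.mem_toSubmodule _).mpr (key k.1 k.2 ((⁅x, y⁆ : Lgtt s' t).2.2.1 k))

/-- The witness. -/
noncomputable def witness (s' t : ℕ) : HypergeneratedWitness (2 + (2 + t)) (s' + 1) 1 where
  L := Lgtt s' t
  V := Vv s' t
  strat := strat
  rank_eq := finrank_V1
  hyper := hyper

end HyperConstruction

theorem exists_hypergenerated (m s : ℕ) (hm : 4 ≤ m) (hs : 1 ≤ s) :
    Nonempty (HypergeneratedWitness m s 1) := by
  have h1 : m = 2 + (2 + (m - 4)) := by omega
  have h2 : s = (s - 1) + 1 := by omega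
  rw [h1, h2]
  exact ⟨HyperConstruction.witness (s - 1) (m - 4)⟩
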